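/- Let k ≥ 0 and let g : ℂ × ℂ × ℝ^k → ℝ be twice continuously differentiable. For ε ∈ ℝ define φ_ε(z₀, z₁, x) = g(z₀, z₁, x) − log|z₀z₁ + ε|² on the open set where z₀z₁ + ε ≠ 0. Fix x₀ ∈ ℝ^k and set p = (0, 0, x₀). Assume: (i) the Fréchet derivative of the function x ↦ g(0, 0, x) vanishes at x₀, and (ii) the second derivative (Hessian) of x ↦ g(0, 0, x) at x₀ is a nondegenerate bilinear form on ℝ^k. Then there exist ε₁ > 0 and an open neighborhood U of p in ℂ × ℂ × ℝ^k such that for every ε with 0 < ε < ε₁ there is exactly one point p_ε ∈ U at which the Fréchet derivative of φ_ε vanishes; moreover p_ε → p as ε → 0⁺. -/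

import Mathlib

open Filter Topology Complex ContinuousLinearMap

noncomputable section CritAux

variable {k : ℕ}

local notation "X" => EuclideanSpace ℝ (Fin k)
local notation "EE" => ℂ × ℂ × EuclideanSpace ℝ (Fin k)

/-- The linear embedding `v ↦ (0,0,v)`. -/
def jL : X →L[ℝ] EE := (inr ℝ ℂ (ℂ × X)).comp (inr ℝ ℂ X)

lemma jL_apply (v : X) : jL v = ((0 : ℂ), (0 : ℂ), v) := rfl

/-- Precomposition with `jL`. -/
def Pc : (EE →L[ℝ] ℝ) →L[ℝ] (X →L[ℝ] ℝ) := (compL ℝ X EE ℝ).flip jL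

lemma Pc_apply (A : EE →L[ℝ] ℝ) : Pc A = A.comp jL := rfl

/-- Evaluation on the standard basis, turning a functional on `X` into a vector of `X`. -/
def Tdual : (X →L[ℝ] ℝ) →L[ℝ] X :=
  ((EuclideanSpace.equiv (Fin k) ℝ).symm.toContinuousLinearMap).comp
    (ContinuousLinearMap.pi fun i => ContinuousLinearMap.apply ℝ ℝ (EuclideanSpace.single i 1))

lemma Tdual_eq_zero_iff (A : X →L[ℝ] ℝ) : Tdual A = 0 ↔ A = 0 := by
  constructor
  · intro h
    have h1 : (fun i => A (EuclideanSpace.single i (1:ℝ))) = (0 : Fin k → ℝ) := by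
      have := congrArg (EuclideanSpace.equiv (Fin k) ℝ) h
      simpa [Tdual] using this
    have h2 : A.toLinearMap = (0 : X →L[ℝ] ℝ).toLinearMap := by
      apply Module.Basis.ext (EuclideanSpace.basisFun (Fin k) ℝ).toBasis
      intro i
      have := congrFun h1 i
      simpa [OrthonormalBasis.coe_toBasis, EuclideanSpace.basisFun_apply] using this
    exact ContinuousLinearMap.coe_injective h2
  · rintro rfl
    exact map_zero _


/-- Complex representative of the real derivative of `g` in the `z₀` slot. -/
def aC (g : EE → ℝ) (q : EE) : ℂ :=
  Complex.ofReal (fderiv ℝ g q ((1:ℂ), (0:ℂ), (0:X))) +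
    Complex.ofReal (fderiv ℝ g q (Complex.I, (0:ℂ), (0:X))) * Complex.I

/-- Complex representative of the real derivative of `g` in the `z₁` slot. -/
def bC (g : EE → ℝ) (q : EE) : ℂ :=
  Complex.ofReal (fderiv ℝ g q ((0:ℂ), (1:ℂ), (0:X))) +
    Complex.ofReal (fderiv ℝ g q ((0:ℂ), Complex.I, (0:X))) * Complex.I

/-- Gradient of `g` in the `x` slot. -/
def cX (g : EE → ℝ) (q : EE) : X := Tdual (Pc (fderiv ℝ g q))

/-- The nonlinear system whose zeros are the critical points of `φ_ε`. -/
def Hmap (g : EE → ℝ) (x : EE × ℝ) : EE :=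
  (x.1.2.1 - (x.1.1 * x.1.2.1 + (x.2 : ℂ)) * (starRingEnd ℂ (aC g x.1) / 2),
   x.1.1 - (x.1.1 * x.1.2.1 + (x.2 : ℂ)) * (starRingEnd ℂ (bC g x.1) / 2),
   cX g x.1)

def Phi (g : EE → ℝ) (x : EE × ℝ) : EE × ℝ := (Hmap g x, x.2)

/-- helper: real part of `conj u * h`. -/
lemma re_conj_mul (u h : ℂ) : ((starRingEnd ℂ u) * h).re = u.re * h.re + u.im * h.im := by
  simp [Complex.mul_re]

lemma eq_of_re_conj {u v : ℂ} (h : ∀ x : ℂ, ((starRingEnd ℂ u) * x).re = ((starRingEnd ℂ v) * x).re) :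
    u = v := by
  have h1 := h 1
  have h2 := h Complex.I
  simp [re_conj_mul] at h1 h2
  exact Complex.ext h1 h2

/-- The key complex-arithmetic equivalence. -/
lemma complex_key {w z a : ℂ} (hw : w ≠ 0) :
    z - w * (starRingEnd ℂ a / 2) = 0 ↔
      a = ((2:ℝ) * (Complex.normSq w)⁻¹) • (w * starRingEnd ℂ z) := by
  have hsqR : Complex.normSq w ≠ 0 := ne_of_gt (Complex.normSq_pos.mpr hw)
  have hsq : (Complex.normSq w : ℂ) ≠ 0 := Complex.ofReal_ne_zero.mpr hsqR
  have e1 : z - w * (starRingEnd ℂ a / 2) = 0 ↔ w * starRingEnd ℂ a = 2 * z := by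
    rw [sub_eq_zero]
    constructor
    · intro h; linear_combination (-2 : ℂ) * h
    · intro h; linear_combination (-1/2 : ℂ) * h
  have e4 : starRingEnd ℂ w * a = 2 * starRingEnd ℂ z ↔ w * starRingEnd ℂ a = 2 * z := by
    constructor
    · intro h
      have := congrArg (starRingEnd ℂ) h
      simpa [map_mul, Complex.conj_conj, map_ofNat] using this
    · intro h
      have := congrArg (starRingEnd ℂ) h
      simpa [map_mul, Complex.conj_conj, map_ofNat] using this
  have e3 : (Complex.normSq w : ℂ) * a = 2 * (w * starRingEnd ℂ z) ↔
      starRingEnd ℂ w * a = 2 * starRingEnd ℂ z := by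
    rw [← Complex.mul_conj, mul_assoc]
    constructor
    · intro h; exact mul_left_cancel₀ hw (by linear_combination h)
    · intro h; linear_combination w * h
  have e2 : a = ((2:ℝ) * (Complex.normSq w)⁻¹) • (w * starRingEnd ℂ z) ↔
      (Complex.normSq w : ℂ) * a = 2 * (w * starRingEnd ℂ z) := by
    have hs : (((2:ℝ) * (Complex.normSq w)⁻¹ : ℝ) : ℂ) * (w * starRingEnd ℂ z)
        = 2 * (w * starRingEnd ℂ z) / (Complex.normSq w : ℂ) := by
      push_cast
      field_simp
    rw [Complex.real_smul, hs, eq_div_iff hsq, mul_comm a _]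
  exact e1.trans (e4.symm.trans (e3.symm.trans e2.symm))


lemma clm_slot0 (A : (ℂ × ℂ × EuclideanSpace ℝ (Fin k)) →L[ℝ] ℝ) (h : ℂ) :
    A (h, 0, 0) = ((starRingEnd ℂ (Complex.ofReal (A ((1:ℂ),(0:ℂ),(0:X))) +
      Complex.ofReal (A (Complex.I,(0:ℂ),(0:X))) * Complex.I)) * h).re := by
  have hdec : ((h, 0, 0) : EE) =
      h.re • (((1:ℂ),(0:ℂ),(0:X)) : EE) + h.im • ((Complex.I,(0:ℂ),(0:X)) : EE) := by
    refine Prod.ext ?_ (Prod.ext ?_ ?_) <;>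
      simp [Complex.real_smul, Complex.ext_iff]
  rw [hdec, map_add, map_smul, map_smul, re_conj_mul]
  simp
  ring

lemma clm_slot1 (A : (ℂ × ℂ × EuclideanSpace ℝ (Fin k)) →L[ℝ] ℝ) (h : ℂ) :
    A (0, h, 0) = ((starRingEnd ℂ (Complex.ofReal (A ((0:ℂ),(1:ℂ),(0:X))) +
      Complex.ofReal (A ((0:ℂ),Complex.I,(0:X))) * Complex.I)) * h).re := by
  have hdec : ((0, h, 0) : EE) =
      h.re • (((0:ℂ),(1:ℂ),(0:X)) : EE) + h.im • (((0:ℂ),Complex.I,(0:X)) : EE) := by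
    refine Prod.ext ?_ (Prod.ext ?_ ?_) <;>
      simp [Complex.real_smul, Complex.ext_iff]
  rw [hdec, map_add, map_smul, map_smul, re_conj_mul]
  simp
  ring

lemma hasFDerivAt_normSq (z : ℂ) : HasFDerivAt Complex.normSq
    (((2*z.re) • Complex.reCLM + (2*z.im) • Complex.imCLM : ℂ →L[ℝ] ℝ)) z := by
  have h1 : HasFDerivAt (fun w : ℂ => w.re * w.re + w.im * w.im)
      ((z.re • Complex.reCLM + z.re • Complex.reCLM) +
        (z.im • Complex.imCLM + z.im • Complex.imCLM)) z := by
    exact (((Complex.reCLM.hasFDerivAt (x := z)).mul (Complex.reCLM.hasFDerivAt)).add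
      ((Complex.imCLM.hasFDerivAt (x := z)).mul (Complex.imCLM.hasFDerivAt)))
  have h2 : (fun w : ℂ => w.re * w.re + w.im * w.im) = Complex.normSq := by
    funext w; rw [Complex.normSq_apply]
  rw [h2] at h1
  convert h1 using 1
  ext w <;> simp <;> ring



def p0c : EE →L[ℝ] ℂ := fst ℝ ℂ (ℂ × X)
def p1c : EE →L[ℝ] ℂ := (fst ℝ ℂ X).comp (snd ℝ ℂ (ℂ × X))

lemma crit_iff (g : EE → ℝ) (hg : ContDiff ℝ 2 g) (ε : ℝ) (q : EE)
    (hw : q.1 * q.2.1 + (ε:ℂ) ≠ 0) :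
    fderiv ℝ (fun p : EE => g p - Real.log (Complex.normSq (p.1 * p.2.1 + (ε:ℂ)))) q = 0 ↔
    Hmap g (q, ε) = 0 := by
  set w : ℂ := q.1 * q.2.1 + (ε:ℂ) with hwdef
  have hns : Complex.normSq w ≠ 0 := ne_of_gt (Complex.normSq_pos.mpr hw)
  set N : EE →L[ℝ] ℝ := (Complex.normSq w)⁻¹ •
    ((((2*w.re) • Complex.reCLM + (2*w.im) • Complex.imCLM : ℂ →L[ℝ] ℝ)).comp
      (q.1 • p1c + q.2.1 • p0c)) with hNdef
  have hWd : HasFDerivAt (fun p : EE => p.1 * p.2.1 + (ε:ℂ)) (q.1 • p1c + q.2.1 • p0c) q := by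
    exact ((p0c.hasFDerivAt (x := q)).mul (p1c.hasFDerivAt)).add_const (ε:ℂ)
  have hcomp : HasFDerivAt (fun p : EE => Complex.normSq (p.1 * p.2.1 + (ε:ℂ)))
      ((((2*w.re) • Complex.reCLM + (2*w.im) • Complex.imCLM : ℂ →L[ℝ] ℝ)).comp
        (q.1 • p1c + q.2.1 • p0c)) q := (hasFDerivAt_normSq w).comp q hWd
  have hlog : HasFDerivAt (fun p : EE => Real.log (Complex.normSq (p.1 * p.2.1 + (ε:ℂ)))) N q :=
    by
      have h := (Real.hasDerivAt_log hns).comp_hasFDerivAt q hcomp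
      exact h
  have hgd : HasFDerivAt g (fderiv ℝ g q) q :=
    (hg.differentiable (by norm_num) q).hasFDerivAt
  have hf : fderiv ℝ (fun p : EE => g p - Real.log (Complex.normSq (p.1 * p.2.1 + (ε:ℂ)))) q
      = fderiv ℝ g q - N := (hgd.sub hlog).fderiv
  rw [hf, sub_eq_zero]
  -- evaluation of N on the three slots
  have hN0 : ∀ h : ℂ, N ((h, 0, 0) : EE) =
      ((starRingEnd ℂ (((2:ℝ)*(Complex.normSq w)⁻¹) • (w * starRingEnd ℂ q.2.1)) * h)).re := by
    intro h
    simp only [hNdef, ContinuousLinearMap.smul_apply, ContinuousLinearMap.comp_apply,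
      ContinuousLinearMap.add_apply, p0c, p1c, ContinuousLinearMap.coe_fst',
      ContinuousLinearMap.coe_snd', Complex.reCLM_apply, Complex.imCLM_apply,
      Complex.real_smul]
    simp [Complex.mul_re, Complex.mul_im, Complex.conj_re, Complex.conj_im]
    ring
  have hN1 : ∀ h : ℂ, N ((0, h, 0) : EE) =
      ((starRingEnd ℂ (((2:ℝ)*(Complex.normSq w)⁻¹) • (w * starRingEnd ℂ q.1)) * h)).re := by
    intro h
    simp only [hNdef, ContinuousLinearMap.smul_apply, ContinuousLinearMap.comp_apply,
      ContinuousLinearMap.add_apply, p0c, p1c, ContinuousLinearMap.coe_fst',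
      ContinuousLinearMap.coe_snd', Complex.reCLM_apply, Complex.imCLM_apply,
      Complex.real_smul]
    simp [Complex.mul_re, Complex.mul_im, Complex.conj_re, Complex.conj_im]
    ring
  have hNx : ∀ v : X, N ((0, 0, v) : EE) = 0 := by
    intro v
    simp [hNdef, p0c, p1c]
  constructor
  · intro hEq
    have hA : aC g q = ((2:ℝ)*(Complex.normSq w)⁻¹) • (w * starRingEnd ℂ q.2.1) := by
      apply eq_of_re_conj
      intro x
      have h1 : fderiv ℝ g q ((x, 0, 0) : EE) = N ((x, 0, 0) : EE) := by rw [hEq]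
      rw [clm_slot0, hN0] at h1
      exact h1
    have hB : bC g q = ((2:ℝ)*(Complex.normSq w)⁻¹) • (w * starRingEnd ℂ q.1) := by
      apply eq_of_re_conj
      intro x
      have h1 : fderiv ℝ g q ((0, x, 0) : EE) = N ((0, x, 0) : EE) := by rw [hEq]
      rw [clm_slot1, hN1] at h1
      exact h1
    have hC : cX g q = 0 := by
      have hPc : Pc (fderiv ℝ g q) = 0 := by
        apply ContinuousLinearMap.ext
        intro v
        have h1 : fderiv ℝ g q ((0, 0, v) : EE) = N ((0, 0, v) : EE) := by rw [hEq]
        rw [hNx] at h1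
        simpa [Pc_apply, jL_apply] using h1
      rw [cX, hPc, map_zero]
    refine Prod.ext ?_ (Prod.ext ?_ ?_)
    · show q.2.1 - w * (starRingEnd ℂ (aC g q) / 2) = 0
      exact (complex_key hw).mpr hA
    · show q.1 - w * (starRingEnd ℂ (bC g q) / 2) = 0
      exact (complex_key hw).mpr hB
    · exact hC
  · intro hH
    have h1 : q.2.1 - w * (starRingEnd ℂ (aC g q) / 2) = 0 := congrArg Prod.fst hH
    have h2 : q.1 - w * (starRingEnd ℂ (bC g q) / 2) = 0 := congrArg (fun z => z.2.1) hH
    have h3 : cX g q = 0 := congrArg (fun z => z.2.2) hH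
    have hA := (complex_key hw).mp h1
    have hB := (complex_key hw).mp h2
    have hPc : Pc (fderiv ℝ g q) = 0 := (Tdual_eq_zero_iff _).mp h3
    have hX : ∀ v : X, fderiv ℝ g q ((0, 0, v) : EE) = 0 := by
      intro v
      have := congrArg (fun (A : X →L[ℝ] ℝ) => A v) hPc
      simpa [Pc_apply, jL_apply] using this
    apply ContinuousLinearMap.ext
    intro h
    have hdec : (h : EE) = ((h.1, 0, 0) : EE) + ((0, h.2.1, 0) : EE) + ((0, 0, h.2.2) : EE) := by
      refine Prod.ext ?_ (Prod.ext ?_ ?_) <;> simp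
    rw [hdec, map_add, map_add, map_add, map_add]
    rw [clm_slot0, clm_slot1, hX, hN0, hN1, hNx]
    rw [← hA, ← hB]
    rfl



end CritAux

set_option maxHeartbeats 2000000 in
/-- Local model of Theorem 1: if `x₀` is a nondegenerate critical point of
`x ↦ g(0,0,x)`, then for every sufficiently small `ε > 0` the function
`φ_ε = g - log|z₀z₁ + ε|²` has exactly one critical point near `p = (0,0,x₀)`, and these
critical points converge to `p` as `ε → 0⁺`. -/
theorem unique_critical_point_near_singular_set
    (k : ℕ) (g : ℂ × ℂ × EuclideanSpace ℝ (Fin k) → ℝ) (hg : ContDiff ℝ 2 g)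
    (x₀ : EuclideanSpace ℝ (Fin k))
    (hcrit : fderiv ℝ (fun y : EuclideanSpace ℝ (Fin k) => g ((0 : ℂ), (0 : ℂ), y)) x₀ = 0)
    (hnd : ∀ v : EuclideanSpace ℝ (Fin k), v ≠ 0 →
      fderiv ℝ (fderiv ℝ (fun y : EuclideanSpace ℝ (Fin k) => g ((0 : ℂ), (0 : ℂ), y))) x₀ v ≠ 0) :
    ∃ ε₁ > (0 : ℝ), ∃ U : Set (ℂ × ℂ × EuclideanSpace ℝ (Fin k)), IsOpen U ∧
      ((0 : ℂ), (0 : ℂ), x₀) ∈ U ∧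
      ∃ pfun : ℝ → ℂ × ℂ × EuclideanSpace ℝ (Fin k),
        (∀ ε : ℝ, 0 < ε → ε < ε₁ →
          pfun ε ∈ U ∧ (pfun ε).1 * (pfun ε).2.1 + (ε : ℂ) ≠ 0 ∧
          fderiv ℝ (fun p : ℂ × ℂ × EuclideanSpace ℝ (Fin k) =>
            g p - Real.log (Complex.normSq (p.1 * p.2.1 + (ε : ℂ)))) (pfun ε) = 0 ∧
          ∀ q ∈ U, q.1 * q.2.1 + (ε : ℂ) ≠ 0 →
            fderiv ℝ (fun p : ℂ × ℂ × EuclideanSpace ℝ (Fin k) =>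
              g p - Real.log (Complex.normSq (p.1 * p.2.1 + (ε : ℂ)))) q = 0 →
            q = pfun ε) ∧
        Tendsto pfun (𝓝[>] (0 : ℝ)) (𝓝 ((0 : ℂ), (0 : ℂ), x₀)) := by
  classical
  set p₀ : (ℂ × ℂ × EuclideanSpace ℝ (Fin k)) := ((0 : ℂ), (0 : ℂ), x₀) with hp₀def
  set P0 : (ℂ × ℂ × EuclideanSpace ℝ (Fin k)) × ℝ := (p₀, (0 : ℝ)) with hP0def
  -- basic differentiability facts
  have hgdiff : Differentiable ℝ g := hg.differentiable (by norm_num)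
  have hDg : ContDiff ℝ 1 (fderiv ℝ g) := hg.fderiv_right (by norm_num)
  -- translation of the restricted derivatives
  have hrestr : ∀ y : EuclideanSpace ℝ (Fin k), fderiv ℝ (fun y : EuclideanSpace ℝ (Fin k) => g ((0 : ℂ), (0 : ℂ), y)) y
      = Pc (fderiv ℝ g (jL y)) := by
    intro y
    have hgj : (fun y : EuclideanSpace ℝ (Fin k) => g ((0 : ℂ), (0 : ℂ), y)) = g ∘ ⇑(jL (k := k)) := rfl
    have h1 : fderiv ℝ (g ∘ ⇑(jL (k := k))) y = (fderiv ℝ g (jL y)).comp jL := by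
      rw [fderiv_comp y (hgdiff _) (jL.differentiableAt)]
      rw [ContinuousLinearMap.fderiv]
    rw [hgj, h1, Pc_apply]
  set D2 : (ℂ × ℂ × EuclideanSpace ℝ (Fin k)) →L[ℝ] ((ℂ × ℂ × EuclideanSpace ℝ (Fin k)) →L[ℝ] ℝ) := fderiv ℝ (fderiv ℝ g) p₀ with hD2def
  have hD2 : HasFDerivAt (fderiv ℝ g) D2 p₀ := ((hDg.differentiable one_ne_zero) p₀).hasFDerivAt
  have houter : fderiv ℝ (fderiv ℝ (fun y : EuclideanSpace ℝ (Fin k) => g ((0 : ℂ), (0 : ℂ), y))) x₀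
      = Pc.comp (D2.comp jL) := by
    have h0 : fderiv ℝ (fun y : EuclideanSpace ℝ (Fin k) => g ((0 : ℂ), (0 : ℂ), y))
        = fun y => Pc (fderiv ℝ g (jL y)) := funext hrestr
    rw [h0]
    have hD2' : HasFDerivAt (fun y : EuclideanSpace ℝ (Fin k) => fderiv ℝ g (jL y)) (D2.comp jL) x₀ := by
      have hj : HasFDerivAt (⇑(jL (k := k))) (jL (k := k)) x₀ := jL.hasFDerivAt
      exact hD2.comp x₀ hj
    exact ((Pc.hasFDerivAt).comp x₀ hD2').fderiv
  have hndP : ∀ u : EuclideanSpace ℝ (Fin k), u ≠ 0 → Pc (D2 (jL u)) ≠ 0 := by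
    intro u hu
    have h1 := hnd u hu
    rw [houter] at h1
    simpa using h1
  have hc0 : cX g p₀ = 0 := by
    have h1 : Pc (fderiv ℝ g p₀) = 0 := by
      have := hrestr x₀
      rw [hcrit] at this
      exact this.symm
    rw [cX, h1, map_zero]
  -- smoothness of the auxiliary maps
  have haC : ContDiff ℝ 1 (aC g) := by
    have h1 : ContDiff ℝ 1 (fun q  : ℂ × ℂ × EuclideanSpace ℝ (Fin k) => fderiv ℝ g q ((1:ℂ), (0:ℂ), (0 : EuclideanSpace ℝ (Fin k)))) :=
      hDg.clm_apply contDiff_const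
    have h2 : ContDiff ℝ 1 (fun q  : ℂ × ℂ × EuclideanSpace ℝ (Fin k) => fderiv ℝ g q (Complex.I, (0:ℂ), (0 : EuclideanSpace ℝ (Fin k)))) :=
      hDg.clm_apply contDiff_const
    exact (Complex.ofRealCLM.contDiff.comp h1).add
      ((Complex.ofRealCLM.contDiff.comp h2).mul contDiff_const)
  have hbC : ContDiff ℝ 1 (bC g) := by
    have h1 : ContDiff ℝ 1 (fun q  : ℂ × ℂ × EuclideanSpace ℝ (Fin k) => fderiv ℝ g q ((0:ℂ), (1:ℂ), (0 : EuclideanSpace ℝ (Fin k)))) :=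
      hDg.clm_apply contDiff_const
    have h2 : ContDiff ℝ 1 (fun q  : ℂ × ℂ × EuclideanSpace ℝ (Fin k) => fderiv ℝ g q ((0:ℂ), Complex.I, (0 : EuclideanSpace ℝ (Fin k)))) :=
      hDg.clm_apply contDiff_const
    exact (Complex.ofRealCLM.contDiff.comp h1).add
      ((Complex.ofRealCLM.contDiff.comp h2).mul contDiff_const)
  have hconj : ContDiff ℝ 1 (fun z : ℂ => starRingEnd ℂ z) := by
    have h : (fun z : ℂ => starRingEnd ℂ z) = ⇑(Complex.conjCLE.toContinuousLinearMap) := by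
      funext z; simp
    rw [h]
    exact ContinuousLinearMap.contDiff _
  have hcXC : ContDiff ℝ 1 (cX g) := ((Tdual.comp Pc).contDiff).comp hDg
  have hwfun : ContDiff ℝ 1 (fun x : (ℂ × ℂ × EuclideanSpace ℝ (Fin k)) × ℝ => x.1.1 * x.1.2.1 + (x.2 : ℂ)) := by
    have h1 : ContDiff ℝ 1 (fun x : (ℂ × ℂ × EuclideanSpace ℝ (Fin k)) × ℝ => x.1.1) := (contDiff_id.fst).fst
    have h2 : ContDiff ℝ 1 (fun x : (ℂ × ℂ × EuclideanSpace ℝ (Fin k)) × ℝ => x.1.2.1) := ((contDiff_id.fst).snd).fst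
    have h3 : ContDiff ℝ 1 (fun x : (ℂ × ℂ × EuclideanSpace ℝ (Fin k)) × ℝ => (x.2 : ℂ)) :=
      Complex.ofRealCLM.contDiff.comp contDiff_id.snd
    exact (h1.mul h2).add h3
  have hcafun : ContDiff ℝ 1 (fun x : (ℂ × ℂ × EuclideanSpace ℝ (Fin k)) × ℝ => starRingEnd ℂ (aC g x.1) / 2) :=
    ((hconj.comp (haC.comp contDiff_id.fst)).div_const 2)
  have hcbfun : ContDiff ℝ 1 (fun x : (ℂ × ℂ × EuclideanSpace ℝ (Fin k)) × ℝ => starRingEnd ℂ (bC g x.1) / 2) :=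
    ((hconj.comp (hbC.comp contDiff_id.fst)).div_const 2)
  have hPhiC : ContDiff ℝ 1 (Phi g) := by
    refine ContDiff.prodMk (ContDiff.prodMk ?_ (ContDiff.prodMk ?_ ?_)) contDiff_id.snd
    · exact (((contDiff_id.fst).snd).fst).sub (hwfun.mul hcafun)
    · exact ((contDiff_id.fst).fst).sub (hwfun.mul hcbfun)
    · exact hcXC.comp contDiff_id.fst
  -- explicit derivative of Phi at P0
  set πE : ((ℂ × ℂ × EuclideanSpace ℝ (Fin k)) × ℝ) →L[ℝ] (ℂ × ℂ × EuclideanSpace ℝ (Fin k)) := fst ℝ (ℂ × ℂ × EuclideanSpace ℝ (Fin k)) ℝ with hπE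
  set πr : ((ℂ × ℂ × EuclideanSpace ℝ (Fin k)) × ℝ) →L[ℝ] ℝ := snd ℝ (ℂ × ℂ × EuclideanSpace ℝ (Fin k)) ℝ with hπr
  set Wc : ((ℂ × ℂ × EuclideanSpace ℝ (Fin k)) × ℝ) →L[ℝ] ℂ := Complex.ofRealCLM.comp πr with hWc
  set L : ((ℂ × ℂ × EuclideanSpace ℝ (Fin k)) × ℝ) →L[ℝ] ((ℂ × ℂ × EuclideanSpace ℝ (Fin k)) × ℝ) :=
    ((p1c.comp πE - ((starRingEnd ℂ (aC g p₀) / 2) • Wc)).prod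
      ((p0c.comp πE - ((starRingEnd ℂ (bC g p₀) / 2) • Wc)).prod
        ((Tdual.comp Pc).comp (D2.comp πE)))).prod πr with hLdef
  have hwP : HasFDerivAt (fun x : (ℂ × ℂ × EuclideanSpace ℝ (Fin k)) × ℝ => x.1.1 * x.1.2.1 + (x.2 : ℂ)) Wc P0 := by
    have h0 : HasFDerivAt (fun x : (ℂ × ℂ × EuclideanSpace ℝ (Fin k)) × ℝ => x.1.1) (p0c.comp πE) P0 :=
      (p0c.comp πE).hasFDerivAt
    have h1 : HasFDerivAt (fun x : (ℂ × ℂ × EuclideanSpace ℝ (Fin k)) × ℝ => x.1.2.1) (p1c.comp πE) P0 :=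
      (p1c.comp πE).hasFDerivAt
    have h2 : HasFDerivAt (fun x : (ℂ × ℂ × EuclideanSpace ℝ (Fin k)) × ℝ => (x.2 : ℂ)) Wc P0 := Wc.hasFDerivAt
    have h3 := (h0.mul h1).add h2
    refine h3.congr_fderiv ?_
    apply ContinuousLinearMap.ext
    intro v
    simp [hP0def, hp₀def]
  have haD : HasFDerivAt (fun x : (ℂ × ℂ × EuclideanSpace ℝ (Fin k)) × ℝ => starRingEnd ℂ (aC g x.1) / 2)
      (fderiv ℝ (fun x : (ℂ × ℂ × EuclideanSpace ℝ (Fin k)) × ℝ => starRingEnd ℂ (aC g x.1) / 2) P0) P0 :=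
    ((hcafun.differentiable one_ne_zero) P0).hasFDerivAt
  have hbD : HasFDerivAt (fun x : (ℂ × ℂ × EuclideanSpace ℝ (Fin k)) × ℝ => starRingEnd ℂ (bC g x.1) / 2)
      (fderiv ℝ (fun x : (ℂ × ℂ × EuclideanSpace ℝ (Fin k)) × ℝ => starRingEnd ℂ (bC g x.1) / 2) P0) P0 :=
    ((hcbfun.differentiable one_ne_zero) P0).hasFDerivAt
  have hP1 : HasFDerivAt (fun x : (ℂ × ℂ × EuclideanSpace ℝ (Fin k)) × ℝ =>
      x.1.2.1 - (x.1.1 * x.1.2.1 + (x.2 : ℂ)) * (starRingEnd ℂ (aC g x.1) / 2))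
      (p1c.comp πE - ((starRingEnd ℂ (aC g p₀) / 2) • Wc)) P0 := by
    have h1 : HasFDerivAt (fun x : (ℂ × ℂ × EuclideanSpace ℝ (Fin k)) × ℝ => x.1.2.1) (p1c.comp πE) P0 :=
      (p1c.comp πE).hasFDerivAt
    have h2 := h1.sub (hwP.mul haD)
    refine h2.congr_fderiv ?_
    apply ContinuousLinearMap.ext
    intro v
    simp [hP0def, hp₀def]
  have hP2 : HasFDerivAt (fun x : (ℂ × ℂ × EuclideanSpace ℝ (Fin k)) × ℝ =>
      x.1.1 - (x.1.1 * x.1.2.1 + (x.2 : ℂ)) * (starRingEnd ℂ (bC g x.1) / 2))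
      (p0c.comp πE - ((starRingEnd ℂ (bC g p₀) / 2) • Wc)) P0 := by
    have h1 : HasFDerivAt (fun x : (ℂ × ℂ × EuclideanSpace ℝ (Fin k)) × ℝ => x.1.1) (p0c.comp πE) P0 :=
      (p0c.comp πE).hasFDerivAt
    have h2 := h1.sub (hwP.mul hbD)
    refine h2.congr_fderiv ?_
    apply ContinuousLinearMap.ext
    intro v
    simp [hP0def, hp₀def]
  have hP3 : HasFDerivAt (fun x : (ℂ × ℂ × EuclideanSpace ℝ (Fin k)) × ℝ => cX g x.1)
      ((Tdual.comp Pc).comp (D2.comp πE)) P0 := by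
    have hπ : HasFDerivAt (fun x : (ℂ × ℂ × EuclideanSpace ℝ (Fin k)) × ℝ => x.1) πE P0 := πE.hasFDerivAt
    have hmid : HasFDerivAt (fun x : (ℂ × ℂ × EuclideanSpace ℝ (Fin k)) × ℝ => fderiv ℝ g x.1) (D2.comp πE) P0 :=
      hD2.comp P0 hπ
    exact ((Tdual.comp Pc).hasFDerivAt).comp P0 hmid
  have hP4 : HasFDerivAt (fun x : (ℂ × ℂ × EuclideanSpace ℝ (Fin k)) × ℝ => x.2) πr P0 := πr.hasFDerivAt
  have hPhiD : HasFDerivAt (Phi g) L P0 := HasFDerivAt.prodMk (HasFDerivAt.prodMk hP1 (HasFDerivAt.prodMk hP2 hP3)) hP4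
  have hstrict : HasStrictFDerivAt (Phi g) L P0 :=
    (hPhiC.contDiffAt).hasStrictFDerivAt' hPhiD one_ne_zero
  -- injectivity of L
  have hinj : Function.Injective L := by
    intro v v' hvv
    have hv : L (v - v') = 0 := by rw [map_sub, hvv, sub_self]
    set u : (ℂ × ℂ × EuclideanSpace ℝ (Fin k)) × ℝ := v - v' with hu
    suffices hu0 : u = 0 by
      have := sub_eq_zero.mp hu0
      exact this
    have h4 : u.2 = 0 := congrArg Prod.snd hv
    have hWcu : Wc u = 0 := by
      simp [hWc, hπr, h4]
    have h1 : u.1.2.1 = 0 := by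
      have := congrArg (fun z => z.1.1) hv
      simpa [hLdef, hWcu, hπE, p1c] using this
    have h2 : u.1.1 = 0 := by
      have := congrArg (fun z => z.1.2.1) hv
      simpa [hLdef, hWcu, hπE, p0c] using this
    have h3 : Tdual (Pc (D2 u.1)) = 0 := by
      have := congrArg (fun z => z.1.2.2) hv
      simpa [hLdef, hπE] using this
    have h3' : Pc (D2 u.1) = 0 := (Tdual_eq_zero_iff _).mp h3
    have hu1 : u.1 = jL u.1.2.2 := by
      refine Prod.ext ?_ (Prod.ext ?_ ?_)
      · simpa [jL_apply] using h2
      · simpa [jL_apply] using h1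
      · rfl
    have h5 : u.1.2.2 = 0 := by
      by_contra hne
      exact hndP _ hne (by rw [← hu1]; exact h3')
    refine Prod.ext ?_ h4
    show u.1 = 0
    rw [hu1, h5, map_zero]
  have hbij : Function.Bijective L := by
    refine ⟨hinj, ?_⟩
    have : Function.Injective L.toLinearMap := hinj
    exact LinearMap.injective_iff_surjective.mp this
  set L' : ((ℂ × ℂ × EuclideanSpace ℝ (Fin k)) × ℝ) ≃L[ℝ] ((ℂ × ℂ × EuclideanSpace ℝ (Fin k)) × ℝ) :=
    (LinearEquiv.ofBijective L.toLinearMap hbij).toContinuousLinearEquiv with hL'def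
  have hL'coe : (L' : ((ℂ × ℂ × EuclideanSpace ℝ (Fin k)) × ℝ) →L[ℝ] ((ℂ × ℂ × EuclideanSpace ℝ (Fin k)) × ℝ)) = L := by
    apply ContinuousLinearMap.ext
    intro v
    rfl
  have hstrict' : HasStrictFDerivAt (Phi g) (L' : ((ℂ × ℂ × EuclideanSpace ℝ (Fin k)) × ℝ) →L[ℝ] ((ℂ × ℂ × EuclideanSpace ℝ (Fin k)) × ℝ)) P0 := by
    rw [hL'coe]; exact hstrict
  -- the local inverse
  set ψ := HasStrictFDerivAt.toOpenPartialHomeomorph (Phi g) hstrict' with hψdef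
  have hψcoe : ⇑ψ = Phi g := HasStrictFDerivAt.toOpenPartialHomeomorph_coe hstrict'
  have hsrc : P0 ∈ ψ.source := HasStrictFDerivAt.mem_toOpenPartialHomeomorph_source hstrict'
  have hH0 : Hmap g P0 = (0 : ℂ × ℂ × EuclideanSpace ℝ (Fin k)) := by
    refine Prod.ext ?_ (Prod.ext ?_ ?_)
    · show P0.1.2.1 - (P0.1.1 * P0.1.2.1 + (P0.2 : ℂ)) * (starRingEnd ℂ (aC g P0.1) / 2) = 0
      simp [hP0def, hp₀def]
    · show P0.1.1 - (P0.1.1 * P0.1.2.1 + (P0.2 : ℂ)) * (starRingEnd ℂ (bC g P0.1) / 2) = 0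
      simp [hP0def, hp₀def]
    · exact hc0
  have hPhiP0 : Phi g P0 = ((0 : ℂ × ℂ × EuclideanSpace ℝ (Fin k)), (0 : ℝ)) := by
    rw [Phi, hH0]
  have htgt : ((0 : ℂ × ℂ × EuclideanSpace ℝ (Fin k)), (0 : ℝ)) ∈ ψ.target := by
    rw [← hPhiP0, ← congrFun hψcoe P0]
    exact ψ.map_source hsrc
  -- product neighborhood inside the source
  obtain ⟨U0, I0, hU0open, hI0open, hU0mem, hI0mem, hsub⟩ :=
    isOpen_prod_iff.mp ψ.open_source p₀ 0 hsrc
  -- the inverse curve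
  set F : ℝ → (ℂ × ℂ × EuclideanSpace ℝ (Fin k)) × ℝ := fun ε => ψ.symm ((0 : ℂ × ℂ × EuclideanSpace ℝ (Fin k)), ε) with hFdef
  have hF0 : F 0 = P0 := by
    have h1 : ψ.symm (ψ P0) = P0 := ψ.left_inv hsrc
    rw [hFdef]
    simp only []
    rw [← hPhiP0, ← congrFun hψcoe P0]
    exact h1
  have hFcont : ContinuousAt F 0 := by
    have h1 : ContinuousAt ψ.symm ((0 : ℂ × ℂ × EuclideanSpace ℝ (Fin k)), (0 : ℝ)) := ψ.continuousAt_symm htgt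
    exact h1.comp ((Continuous.prodMk_right (0 : ℂ × ℂ × EuclideanSpace ℝ (Fin k))).continuousAt)
  have hev1 : ∀ᶠ ε in 𝓝 (0 : ℝ), ((0 : ℂ × ℂ × EuclideanSpace ℝ (Fin k)), ε) ∈ ψ.target := by
    have h1 : ContinuousAt (fun ε : ℝ => ((0 : ℂ × ℂ × EuclideanSpace ℝ (Fin k)), ε)) 0 :=
      (Continuous.prodMk_right (0 : ℂ × ℂ × EuclideanSpace ℝ (Fin k))).continuousAt
    exact h1.preimage_mem_nhds (ψ.open_target.mem_nhds htgt)
  have hev2 : ∀ᶠ ε in 𝓝 (0 : ℝ), F ε ∈ U0 ×ˢ I0 := by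
    apply hFcont.preimage_mem_nhds
    rw [hF0]
    exact (hU0open.prod hI0open).mem_nhds ⟨hU0mem, hI0mem⟩
  obtain ⟨ε₁, hε₁pos, hball⟩ := Metric.eventually_nhds_iff_ball.mp (hev1.and hev2)
  obtain ⟨δ, hδpos, hδsub⟩ := Metric.isOpen_iff.mp hI0open 0 hI0mem
  refine ⟨min ε₁ δ, lt_min hε₁pos hδpos, U0, hU0open, hU0mem, fun ε => (F ε).1, ?_, ?_⟩
  · intro ε hε0 hεlt
    have hεball : ε ∈ Metric.ball (0 : ℝ) ε₁ := by
      simp only [Metric.mem_ball, Real.dist_eq, sub_zero]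
      rw [abs_of_pos hε0]
      exact lt_of_lt_of_le hεlt (min_le_left _ _)
    have hεI0 : ε ∈ I0 := by
      apply hδsub
      simp only [Metric.mem_ball, Real.dist_eq, sub_zero]
      rw [abs_of_pos hε0]
      exact lt_of_lt_of_le hεlt (min_le_right _ _)
    obtain ⟨hTg, hFmem⟩ := hball ε hεball
    have hFsrc : F ε ∈ ψ.source := ψ.map_target hTg
    have hri : ψ (F ε) = ((0 : ℂ × ℂ × EuclideanSpace ℝ (Fin k)), ε) := ψ.right_inv hTg
    have hPhiF : Phi g (F ε) = ((0 : ℂ × ℂ × EuclideanSpace ℝ (Fin k)), ε) := by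
      rw [← congrFun hψcoe (F ε)]; exact hri
    have hsnd : (F ε).2 = ε := congrArg Prod.snd hPhiF
    have hFeq : F ε = ((F ε).1, ε) := Prod.ext rfl hsnd
    have hHz : Hmap g ((F ε).1, ε) = 0 := by
      have := congrArg Prod.fst hPhiF
      rw [Phi] at this
      rw [← hFeq]
      exact this
    have hwne : (F ε).1.1 * (F ε).1.2.1 + (ε : ℂ) ≠ 0 := by
      intro h0
      have ha1 : (F ε).1.2.1 - ((F ε).1.1 * (F ε).1.2.1 + (ε : ℂ))
          * (starRingEnd ℂ (aC g (F ε).1) / 2) = 0 := congrArg Prod.fst hHz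
      have ha2 : (F ε).1.1 - ((F ε).1.1 * (F ε).1.2.1 + (ε : ℂ))
          * (starRingEnd ℂ (bC g (F ε).1) / 2) = 0 := congrArg (fun z => z.2.1) hHz
      rw [h0, zero_mul, sub_zero] at ha1 ha2
      rw [ha1, ha2] at h0
      simp only [mul_zero, zero_add] at h0
      have : ε = 0 := by exact_mod_cast h0
      exact absurd this (ne_of_gt hε0)
    refine ⟨hFmem.1, hwne, (crit_iff g hg ε (F ε).1 hwne).mpr hHz, ?_⟩
    intro q hqU hqw hqc
    have hqH : Hmap g (q, ε) = 0 := (crit_iff g hg ε q hqw).mp hqc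
    have hqsrc : (q, ε) ∈ ψ.source := hsub ⟨hqU, hεI0⟩
    have hψq : ψ (q, ε) = ((0 : ℂ × ℂ × EuclideanSpace ℝ (Fin k)), ε) := by
      rw [congrFun hψcoe (q, ε)]
      rw [Phi, hqH]
    have hψF : ψ (F ε) = ((0 : ℂ × ℂ × EuclideanSpace ℝ (Fin k)), ε) := hri
    have : (q, ε) = F ε := ψ.injOn hqsrc hFsrc (by rw [hψq, hψF])
    exact congrArg Prod.fst this
  · have h1 : Tendsto (fun ε => (F ε).1) (𝓝 (0 : ℝ)) (𝓝 p₀) := by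
      have h2 : ContinuousAt (fun ε : ℝ => (F ε).1) 0 := continuousAt_fst.comp hFcont
      simpa [hF0, hP0def] using h2.tendsto
    exact h1.mono_left nhdsWithin_le_nhds
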